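/- Any two non-degenerate triangles contained in a plane integral point set have the same characteristic. Precisely: if P is a set of points in ℝ² with pairwise integer distances, and p,q,r and p',q',r' are two triples of non-collinear points of P, then the squarefree parts of 16·(area of triangle pqr)² and 16·(area of triangle p'q'r')² are equal. -/

import Mathlib

/-- The area of the triangle on points `p q r` of the plane: half the absolute value of
the determinant of `(q - p, r - p)`. -/
noncomputable def triArea (p q r : EuclideanSpace ℝ (Fin 2)) : ℝ :=
  |(q 0 - p 0) * (r 1 - p 1) - (q 1 - p 1) * (r 0 - p 0)| / 2

namespace CharAux

noncomputable def Dt (p q r : EuclideanSpace ℝ (Fin 2)) : ℝ :=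
  (q 0 - p 0) * (r 1 - p 1) - (q 1 - p 1) * (r 0 - p 0)

lemma triArea_sq (p q r : EuclideanSpace ℝ (Fin 2)) :
    16 * triArea p q r ^ 2 = 4 * Dt p q r ^ 2 := by
  unfold triArea Dt
  rw [div_pow, sq_abs]; ring

lemma dist_sq (p q : EuclideanSpace ℝ (Fin 2)) :
    (q 0 - p 0) ^ 2 + (q 1 - p 1) ^ 2 = dist p q ^ 2 := by
  rw [EuclideanSpace.dist_eq, Real.sq_sqrt (by positivity), Fin.sum_univ_two,
    Real.dist_eq, Real.dist_eq, sq_abs, sq_abs]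
  ring

lemma eq_of_coords {p q : EuclideanSpace ℝ (Fin 2)} (h0 : p 0 = q 0) (h1 : p 1 = q 1) :
    p = q := by
  ext i
  fin_cases i <;> assumption

lemma coll_of_Dt (p q r : EuclideanSpace ℝ (Fin 2)) (h : Dt p q r = 0) :
    Collinear ℝ ({p, q, r} : Set (EuclideanSpace ℝ (Fin 2))) := by
  unfold Dt at h
  by_cases hq : q = p
  · subst hq
    have : ({q, q, r} : Set (EuclideanSpace ℝ (Fin 2))) = {q, r} := by simp
    rw [this]
    exact collinear_pair ℝ q r
  have key : ∃ c : ℝ, r 0 - p 0 = c * (q 0 - p 0) ∧ r 1 - p 1 = c * (q 1 - p 1) := by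
    by_cases h0 : q 0 - p 0 = 0
    · have h1 : q 1 - p 1 ≠ 0 := by
        intro h1; exact hq (eq_of_coords (by linarith) (by linarith))
      refine ⟨(r 1 - p 1) / (q 1 - p 1), ?_, ?_⟩
      · rw [h0, mul_zero]
        rw [h0, zero_mul, zero_sub, neg_eq_zero, mul_eq_zero] at h
        rcases h with h | h
        · exact absurd h h1
        · exact h
      · field_simp
    · refine ⟨(r 0 - p 0) / (q 0 - p 0), ?_, ?_⟩
      · field_simp
      · field_simp; nlinarith [h]
  obtain ⟨c, hc0, hc1⟩ := key
  have hmem : p ∈ ({p, q, r} : Set (EuclideanSpace ℝ (Fin 2))) := by simp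
  rw [collinear_iff_of_mem hmem]
  refine ⟨q - p, ?_⟩
  intro x hx
  rcases hx with rfl | rfl | rfl
  · exact ⟨0, by simp⟩
  · refine ⟨1, ?_⟩
    apply eq_of_coords <;> simp [vadd_eq_add]
  · refine ⟨c, ?_⟩
    apply eq_of_coords <;> simp [vadd_eq_add, PiLp.add_apply, PiLp.smul_apply, PiLp.sub_apply,
      smul_eq_mul] <;> linarith

lemma Dt_ne_zero {p q r : EuclideanSpace ℝ (Fin 2)}
    (h : ¬ Collinear ℝ ({p, q, r} : Set (EuclideanSpace ℝ (Fin 2)))) : Dt p q r ≠ 0 :=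
  fun h0 => h (coll_of_Dt p q r h0)

lemma area16_ne_zero {p q r : EuclideanSpace ℝ (Fin 2)}
    (h : ¬ Collinear ℝ ({p, q, r} : Set (EuclideanSpace ℝ (Fin 2)))) :
    16 * triArea p q r ^ 2 ≠ 0 := by
  rw [triArea_sq]
  have := Dt_ne_zero h
  positivity

lemma triArea_rot (p q r : EuclideanSpace ℝ (Fin 2)) : triArea p q r = triArea q r p := by
  unfold triArea
  congr 1
  rw [show (r 0 - q 0) * (p 1 - q 1) - (r 1 - q 1) * (p 0 - q 0) =
    (q 0 - p 0) * (r 1 - p 1) - (q 1 - p 1) * (r 0 - p 0) from by ring]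

lemma triArea_swap23 (p q r : EuclideanSpace ℝ (Fin 2)) : triArea p q r = triArea p r q := by
  unfold triArea
  rw [show (r 0 - p 0) * (q 1 - p 1) - (r 1 - p 1) * (q 0 - p 0) =
    -((q 0 - p 0) * (r 1 - p 1) - (q 1 - p 1) * (r 0 - p 0)) from by ring, abs_neg]

lemma triArea_swap12 (p q r : EuclideanSpace ℝ (Fin 2)) : triArea p q r = triArea q p r := by
  rw [triArea_rot, triArea_swap23, triArea_rot]

/-- The relation "both are naturals whose product is a perfect square". -/
def AreaRel (t u : ℝ) : Prop :=
  ∃ N M w : ℕ, t = N ∧ u = M ∧ N * M = w ^ 2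

lemma AreaRel.trans {t u v : ℝ} (h1 : AreaRel t u) (h2 : AreaRel u v) (hu : u ≠ 0) :
    AreaRel t v := by
  obtain ⟨N, M, w, hN, hM, hw⟩ := h1
  obtain ⟨M', V, w', hM', hV, hw'⟩ := h2
  have hMM' : M = M' := by
    have : (M : ℝ) = (M' : ℝ) := by rw [← hM, ← hM']
    exact_mod_cast this
  subst hMM'
  have hM0 : M ≠ 0 := by
    rintro rfl
    exact hu (by simpa using hM)
  have key : (w * w') ^ 2 = (N * V) * M ^ 2 := by
    have : (w * w') ^ 2 = (N * M) * (M * V) := by rw [hw, hw']; ring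
    rw [this]; ring
  have hdvd : M ∣ w * w' := by
    rw [← Nat.pow_dvd_pow_iff (two_ne_zero)]
    exact ⟨N * V, by rw [key]; ring⟩
  obtain ⟨u', hu'⟩ := hdvd
  refine ⟨N, V, u', hN, hV, ?_⟩
  rw [hu'] at key
  have : M ^ 2 * (N * V) = M ^ 2 * u' ^ 2 :=
    calc M ^ 2 * (N * V) = (N * V) * M ^ 2 := by ring
      _ = (M * u') ^ 2 := key.symm
      _ = M ^ 2 * u' ^ 2 := by ring
  exact Nat.eq_of_mul_eq_mul_left (by positivity) this

lemma edge_rel (p q r r' : EuclideanSpace ℝ (Fin 2))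
    (a b c b' c' e : ℕ)
    (ha : dist p q = a) (hb : dist q r = b) (hc : dist p r = c)
    (hb' : dist q r' = b') (hc' : dist p r' = c') (he : dist r r' = e) :
    ∃ N M w : ℕ, 16 * triArea p q r ^ 2 = N ∧ 16 * triArea p q r' ^ 2 = M ∧
      N * M = w ^ 2 := by
  have hA : (q 0 - p 0) ^ 2 + (q 1 - p 1) ^ 2 = (a : ℝ) ^ 2 := by rw [dist_sq p q, ha]
  have hB : (r 0 - q 0) ^ 2 + (r 1 - q 1) ^ 2 = (b : ℝ) ^ 2 := by rw [dist_sq q r, hb]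
  have hC : (r 0 - p 0) ^ 2 + (r 1 - p 1) ^ 2 = (c : ℝ) ^ 2 := by rw [dist_sq p r, hc]
  have hB' : (r' 0 - q 0) ^ 2 + (r' 1 - q 1) ^ 2 = (b' : ℝ) ^ 2 := by rw [dist_sq q r', hb']
  have hC' : (r' 0 - p 0) ^ 2 + (r' 1 - p 1) ^ 2 = (c' : ℝ) ^ 2 := by rw [dist_sq p r', hc']
  have hE : (r' 0 - r 0) ^ 2 + (r' 1 - r 1) ^ 2 = (e : ℝ) ^ 2 := by rw [dist_sq r r', he]
  have heron1 : 4 * Dt p q r ^ 2 =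
      4 * (a : ℝ) ^ 2 * (c : ℝ) ^ 2 - ((a : ℝ) ^ 2 + (c : ℝ) ^ 2 - (b : ℝ) ^ 2) ^ 2 := by
    unfold Dt; rw [← hA, ← hB, ← hC]; ring
  have heron2 : 4 * Dt p q r' ^ 2 =
      4 * (a : ℝ) ^ 2 * (c' : ℝ) ^ 2 - ((a : ℝ) ^ 2 + (c' : ℝ) ^ 2 - (b' : ℝ) ^ 2) ^ 2 := by
    unfold Dt; rw [← hA, ← hB', ← hC']; ring
  have hbin : 4 * (Dt p q r * Dt p q r') =
      2 * (a : ℝ) ^ 2 * ((c : ℝ) ^ 2 + (c' : ℝ) ^ 2 - (e : ℝ) ^ 2) -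
        ((a : ℝ) ^ 2 + (c : ℝ) ^ 2 - (b : ℝ) ^ 2) *
          ((a : ℝ) ^ 2 + (c' : ℝ) ^ 2 - (b' : ℝ) ^ 2) := by
    unfold Dt; rw [← hA, ← hB, ← hC, ← hB', ← hC', ← hE]; ring
  set zN : ℤ := 4 * (a : ℤ) ^ 2 * (c : ℤ) ^ 2 - ((a : ℤ) ^ 2 + (c : ℤ) ^ 2 - (b : ℤ) ^ 2) ^ 2
    with hzNdef
  set zM : ℤ := 4 * (a : ℤ) ^ 2 * (c' : ℤ) ^ 2 - ((a : ℤ) ^ 2 + (c' : ℤ) ^ 2 - (b' : ℤ) ^ 2) ^ 2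
    with hzMdef
  set zw : ℤ := 2 * (a : ℤ) ^ 2 * ((c : ℤ) ^ 2 + (c' : ℤ) ^ 2 - (e : ℤ) ^ 2) -
      ((a : ℤ) ^ 2 + (c : ℤ) ^ 2 - (b : ℤ) ^ 2) * ((a : ℤ) ^ 2 + (c' : ℤ) ^ 2 - (b' : ℤ) ^ 2)
    with hzwdef
  have hzNr : ((zN : ℤ) : ℝ) = 4 * Dt p q r ^ 2 := by
    rw [heron1, hzNdef]; push_cast; ring
  have hzMr : ((zM : ℤ) : ℝ) = 4 * Dt p q r' ^ 2 := by
    rw [heron2, hzMdef]; push_cast; ring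
  have hzwr : ((zw : ℤ) : ℝ) = 4 * (Dt p q r * Dt p q r') := by
    rw [hbin, hzwdef]; push_cast; ring
  have hzN0 : 0 ≤ zN := by
    have : (0 : ℝ) ≤ ((zN : ℤ) : ℝ) := by rw [hzNr]; positivity
    exact_mod_cast this
  have hzM0 : 0 ≤ zM := by
    have : (0 : ℝ) ≤ ((zM : ℤ) : ℝ) := by rw [hzMr]; positivity
    exact_mod_cast this
  refine ⟨zN.toNat, zM.toNat, zw.natAbs, ?_, ?_, ?_⟩
  · rw [triArea_sq, ← hzNr]
    exact_mod_cast congrArg (fun z : ℤ => ((z : ℝ))) (Int.toNat_of_nonneg hzN0).symm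
  · rw [triArea_sq, ← hzMr]
    exact_mod_cast congrArg (fun z : ℤ => ((z : ℝ))) (Int.toNat_of_nonneg hzM0).symm
  · have hreal : ((zN : ℤ) : ℝ) * ((zM : ℤ) : ℝ) = (((zw : ℤ) : ℝ)) ^ 2 := by
      rw [hzNr, hzMr, hzwr]; ring
    have hint : zN * zM = zw ^ 2 := by exact_mod_cast hreal
    have : (↑(zN.toNat * zM.toNat) : ℤ) = (↑(zw.natAbs ^ 2) : ℤ) := by
      push_cast [Int.toNat_of_nonneg hzN0, Int.toNat_of_nonneg hzM0, Int.natAbs_sq]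
      rw [hint]
      simp [sq_abs]
    exact_mod_cast this

-- squarefree parts: if a*a' is a square and both squarefree, a = a'
lemma sqfree_eq_of_mul_sq (a a' u : ℕ) (ha : Squarefree a) (ha' : Squarefree a')
    (h : a * a' = u ^ 2) : a = a' := by
  have ha0 : a ≠ 0 := ha.ne_zero
  have ha'0 : a' ≠ 0 := ha'.ne_zero
  apply Nat.eq_of_factorization_eq ha0 ha'0
  intro pp
  have hu0 : u ≠ 0 := by
    rintro rfl
    simp at h
    tauto
  have hfa := (Nat.squarefree_iff_factorization_le_one ha0).mp ha pp
  have hfa' := (Nat.squarefree_iff_factorization_le_one ha'0).mp ha' pp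
  have hsum : a.factorization pp + a'.factorization pp = 2 * u.factorization pp := by
    have := congrArg (fun n => Nat.factorization n pp) h
    simpa [Nat.factorization_mul ha0 ha'0, Nat.factorization_pow, mul_comm] using this
  omega

lemma rel_final (N N' : ℕ) (hN : N ≠ 0) (h : ∃ w : ℕ, N * N' = w ^ 2) :
    ∃ k : ℕ, Squarefree k ∧ (∃ m : ℕ, N = k * m ^ 2) ∧ (∃ m : ℕ, N' = k * m ^ 2) := by
  obtain ⟨a, b, hab, ha⟩ := Nat.sq_mul_squarefree N
  by_cases hN' : N' = 0
  · exact ⟨a, ha, ⟨b, by rw [← hab]; ring⟩, ⟨0, by simp [hN']⟩⟩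
  obtain ⟨a', b', hab', ha'⟩ := Nat.sq_mul_squarefree N'
  obtain ⟨w, hw⟩ := h
  have hb : b ≠ 0 := by rintro rfl; simp at hab; exact hN hab.symm
  have hb' : b' ≠ 0 := by rintro rfl; simp at hab'; exact hN' hab'.symm
  -- w^2 = a*a'*(b*b')^2
  have hw2 : w ^ 2 = (a * a') * (b * b') ^ 2 := by rw [← hab, ← hab'] at hw; rw [← hw]; ring
  have hdvd : (b * b') ∣ w := by
    rw [← Nat.pow_dvd_pow_iff (two_ne_zero)]
    exact ⟨a * a', by rw [hw2]; ring⟩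
  obtain ⟨u, hu⟩ := hdvd
  have haau : a * a' = u ^ 2 := by
    have hbb : (b * b') ^ 2 ≠ 0 := by positivity
    have : (b * b') ^ 2 * (a * a') = (b * b') ^ 2 * u ^ 2 := by
      rw [hu] at hw2; rw [mul_comm ((b*b')^2)]; rw [← hw2]; ring
    exact Nat.eq_of_mul_eq_mul_left (Nat.pos_of_ne_zero hbb) this
  have : a = a' := sqfree_eq_of_mul_sq a a' u ha ha' haau
  exact ⟨a, ha, ⟨b, by rw [← hab]; ring⟩, ⟨b', by rw [← hab', this]; ring⟩⟩

lemma edge_rel' (S : Set (EuclideanSpace ℝ (Fin 2)))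
    (hint : ∀ p ∈ S, ∀ q ∈ S, ∃ n : ℕ, dist p q = n)
    (p q r r' : EuclideanSpace ℝ (Fin 2))
    (hp : p ∈ S) (hq : q ∈ S) (hr : r ∈ S) (hr' : r' ∈ S) :
    AreaRel (16 * triArea p q r ^ 2) (16 * triArea p q r' ^ 2) := by
  obtain ⟨a, ha⟩ := hint p hp q hq
  obtain ⟨b, hb⟩ := hint q hq r hr
  obtain ⟨c, hc⟩ := hint p hp r hr
  obtain ⟨b', hb'⟩ := hint q hq r' hr'
  obtain ⟨c', hc'⟩ := hint p hp r' hr'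
  obtain ⟨e, he⟩ := hint r hr r' hr'
  exact edge_rel p q r r' a b c b' c' e ha hb hc hb' hc' he

lemma ncol_of_eq {s t : Set (EuclideanSpace ℝ (Fin 2))}
    (h : ¬ Collinear ℝ s) (hst : s = t) : ¬ Collinear ℝ t := by
  rwa [hst] at h

lemma ne12_of_ncol {a b c : EuclideanSpace ℝ (Fin 2)}
    (h : ¬ Collinear ℝ ({a, b, c} : Set (EuclideanSpace ℝ (Fin 2)))) : a ≠ b := by
  rintro rfl
  exact h (by rw [Set.insert_idem]; exact collinear_pair ℝ a c)

lemma vertex_rel (S : Set (EuclideanSpace ℝ (Fin 2)))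
    (hint : ∀ p ∈ S, ∀ q ∈ S, ∃ n : ℕ, dist p q = n)
    (a b c b' c' : EuclideanSpace ℝ (Fin 2))
    (ha : a ∈ S) (hb : b ∈ S) (hc : c ∈ S) (hb' : b' ∈ S) (hc' : c' ∈ S)
    (h1 : ¬ Collinear ℝ ({a, b, c} : Set (EuclideanSpace ℝ (Fin 2))))
    (h2 : ¬ Collinear ℝ ({a, b', c'} : Set (EuclideanSpace ℝ (Fin 2)))) :
    AreaRel (16 * triArea a b c ^ 2) (16 * triArea a b' c' ^ 2) := by
  by_cases hbb' : Collinear ℝ ({a, b, b'} : Set (EuclideanSpace ℝ (Fin 2)))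
  · -- b' is on line a b, so a b c' is non-degenerate
    have hab : a ≠ b := ne12_of_ncol h1
    have hnc : ¬ Collinear ℝ ({a, b, c'} : Set (EuclideanSpace ℝ (Fin 2))) := by
      intro hcoll
      apply h2
      have hm1 : a ∈ line[ℝ, a, b] := left_mem_affineSpan_pair ℝ a b
      have hm2 : b' ∈ line[ℝ, a, b] :=
        hbb'.mem_affineSpan_of_mem_of_ne (by simp) (by simp) (by simp) hab
      have hm3 : c' ∈ line[ℝ, a, b] :=
        hcoll.mem_affineSpan_of_mem_of_ne (by simp) (by simp) (by simp) hab
      exact collinear_triple_of_mem_affineSpan_pair hm1 hm2 hm3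
    have R1 : AreaRel (16 * triArea a b c ^ 2) (16 * triArea a b c' ^ 2) :=
      edge_rel' S hint a b c c' ha hb hc hc'
    have R2 : AreaRel (16 * triArea a c' b ^ 2) (16 * triArea a c' b' ^ 2) :=
      edge_rel' S hint a c' b b' ha hc' hb hb'
    rw [← triArea_swap23 a b c', show triArea a c' b' = triArea a b' c' from
      (triArea_swap23 a b' c').symm] at R2
    exact R1.trans R2 (area16_ne_zero hnc)
  · have R1 : AreaRel (16 * triArea a b c ^ 2) (16 * triArea a b b' ^ 2) :=
      edge_rel' S hint a b c b' ha hb hc hb'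
    have R2 : AreaRel (16 * triArea a b' b ^ 2) (16 * triArea a b' c' ^ 2) :=
      edge_rel' S hint a b' b c' ha hb' hb hc'
    rw [← triArea_swap23 a b b'] at R2
    exact R1.trans R2 (area16_ne_zero hbb')

lemma chain_rel (S : Set (EuclideanSpace ℝ (Fin 2)))
    (hint : ∀ p ∈ S, ∀ q ∈ S, ∃ n : ℕ, dist p q = n)
    (p q r s a b : EuclideanSpace ℝ (Fin 2))
    (hp : p ∈ S) (hq : q ∈ S) (hr : r ∈ S) (hs : s ∈ S) (ha : a ∈ S) (hb : b ∈ S)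
    (hpqs : ¬ Collinear ℝ ({p, q, s} : Set (EuclideanSpace ℝ (Fin 2))))
    (hsab : ¬ Collinear ℝ ({s, a, b} : Set (EuclideanSpace ℝ (Fin 2)))) :
    AreaRel (16 * triArea p q r ^ 2) (16 * triArea s a b ^ 2) := by
  have R1 : AreaRel (16 * triArea p q r ^ 2) (16 * triArea p q s ^ 2) :=
    edge_rel' S hint p q r s hp hq hr hs
  have hspq : ¬ Collinear ℝ ({s, p, q} : Set (EuclideanSpace ℝ (Fin 2))) :=
    ncol_of_eq hpqs (by ext x; simp; tauto)
  have R2 : AreaRel (16 * triArea s p q ^ 2) (16 * triArea s a b ^ 2) :=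
    vertex_rel S hint s p q a b hs hp hq ha hb hspq hsab
  rw [show triArea s p q = triArea p q s from
    ((triArea_rot p q s).trans (triArea_rot q s p)).symm] at R2
  exact R1.trans R2 (area16_ne_zero hpqs)

end CharAux

open CharAux in
/-- Any two non-degenerate triangles inside a plane integral point set have the same
characteristic, i.e. `16·area²` has the same squarefree part for both. -/
theorem characteristic_eq_of_integral_point_set
    (S : Set (EuclideanSpace ℝ (Fin 2)))
    (hint : ∀ p ∈ S, ∀ q ∈ S, ∃ n : ℕ, dist p q = n)
    (p q r p' q' r' : EuclideanSpace ℝ (Fin 2))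
    (hp : p ∈ S) (hq : q ∈ S) (hr : r ∈ S)
    (hp' : p' ∈ S) (hq' : q' ∈ S) (hr' : r' ∈ S)
    (h1 : ¬ Collinear ℝ ({p, q, r} : Set (EuclideanSpace ℝ (Fin 2))))
    (h2 : ¬ Collinear ℝ ({p', q', r'} : Set (EuclideanSpace ℝ (Fin 2)))) :
    ∃ k : ℕ, Squarefree k ∧
      (∃ m : ℕ, 16 * triArea p q r ^ 2 = (k : ℝ) * (m : ℝ) ^ 2) ∧
      (∃ m : ℕ, 16 * triArea p' q' r' ^ 2 = (k : ℝ) * (m : ℝ) ^ 2) := by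
  have hne : p ≠ q := ne12_of_ncol h1
  have finish : ∀ s a b : EuclideanSpace ℝ (Fin 2), s ∈ S → a ∈ S → b ∈ S →
      ¬ Collinear ℝ ({p, q, s} : Set (EuclideanSpace ℝ (Fin 2))) →
      ¬ Collinear ℝ ({s, a, b} : Set (EuclideanSpace ℝ (Fin 2))) →
      triArea p' q' r' = triArea s a b →
      ∃ k : ℕ, Squarefree k ∧
        (∃ m : ℕ, 16 * triArea p q r ^ 2 = (k : ℝ) * (m : ℝ) ^ 2) ∧
        (∃ m : ℕ, 16 * triArea p' q' r' ^ 2 = (k : ℝ) * (m : ℝ) ^ 2) := by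
    intro s a b hs ha hb hpqs hsab harea
    have R : AreaRel (16 * triArea p q r ^ 2) (16 * triArea p' q' r' ^ 2) := by
      rw [harea]
      exact chain_rel S hint p q r s a b hp hq hr hs ha hb hpqs hsab
    obtain ⟨N, M, w, hN, hM, hw⟩ := R
    have hN0 : N ≠ 0 := by
      rintro rfl
      exact area16_ne_zero h1 (by simpa using hN)
    obtain ⟨k, hk, ⟨m, hm⟩, ⟨m', hm'⟩⟩ := rel_final N M hN0 ⟨w, hw⟩
    refine ⟨k, hk, ⟨m, ?_⟩, ⟨m', ?_⟩⟩
    · rw [hN, hm]; push_cast; ring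
    · rw [hM, hm']; push_cast; ring
  by_cases hc1 : Collinear ℝ ({p, q, p'} : Set (EuclideanSpace ℝ (Fin 2)))
  · by_cases hc2 : Collinear ℝ ({p, q, q'} : Set (EuclideanSpace ℝ (Fin 2)))
    · by_cases hc3 : Collinear ℝ ({p, q, r'} : Set (EuclideanSpace ℝ (Fin 2)))
      · exfalso
        apply h2
        have hm1 : p' ∈ line[ℝ, p, q] :=
          hc1.mem_affineSpan_of_mem_of_ne (by simp) (by simp) (by simp) hne
        have hm2 : q' ∈ line[ℝ, p, q] :=
          hc2.mem_affineSpan_of_mem_of_ne (by simp) (by simp) (by simp) hne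
        have hm3 : r' ∈ line[ℝ, p, q] :=
          hc3.mem_affineSpan_of_mem_of_ne (by simp) (by simp) (by simp) hne
        exact collinear_triple_of_mem_affineSpan_pair hm1 hm2 hm3
      · exact finish r' p' q' hr' hp' hq' hc3 (ncol_of_eq h2 (by ext x; simp; tauto))
          ((triArea_rot p' q' r').trans (triArea_rot q' r' p'))
    · exact finish q' p' r' hq' hp' hr' hc2 (ncol_of_eq h2 (by ext x; simp; tauto))
        (triArea_swap12 p' q' r')
  · exact finish p' q' r' hp' hq' hr' hc1 h2 rfl
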